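/- Let n < m be natural numbers, let S_1 = {A ⊆ [m] : |A| = n and 1 ∈ A}, and let L = VR(S_1, 2), a subcomplex of K = VR(F_n^m, 2). Then the star cluster SC_K(L) is homotopy equivalent to L. -/

import Mathlib

open Finset

/-- An abstract simplicial complex on a vertex type `V`: a collection of nonempty
finite subsets of `V` (the faces), closed under taking nonempty subsets. -/
structure AbsSC (V : Type) where
  faces : Set (Finset V)
  not_empty_mem : ∅ ∉ faces
  down_closed : ∀ s ∈ faces, ∀ t : Finset V, t ⊆ s → t ≠ ∅ → t ∈ faces

namespace AbsSC

variable {V W : Type}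

/-- The vertex set of a simplicial complex. -/
def vertices (K : AbsSC V) : Set V := {v | ({v} : Finset V) ∈ K.faces}

/-- The geometric realization of a simplicial complex: the space of convex weightings
supported on a face, topologized as a subspace of `V → ℝ`. -/
def space (K : AbsSC V) : Type :=
  {f : V → ℝ // (∀ v, 0 ≤ f v) ∧ ∃ s ∈ K.faces, (∀ v, f v ≠ 0 → v ∈ s) ∧ ∑ v ∈ s, f v = 1}

instance (K : AbsSC V) : TopologicalSpace K.space := by unfold space; infer_instance

/-- `L` is a subcomplex of `K`. -/
def IsSubcomplex (L K : AbsSC V) : Prop := L.faces ⊆ K.faces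

/-- Homotopy equivalence of simplicial complexes (of their geometric realizations). -/
def HEquiv (K : AbsSC V) (L : AbsSC W) : Prop :=
  Nonempty (ContinuousMap.HomotopyEquiv K.space L.space)

/-- The realization of `K` is homotopy equivalent to the topological space `X`. -/
def HEquivTop (K : AbsSC V) (X : Type) [TopologicalSpace X] : Prop :=
  Nonempty (ContinuousMap.HomotopyEquiv K.space X)

/-- The inclusion of realizations induced by a subcomplex inclusion. -/
def incl {L K : AbsSC V} (h : L.faces ⊆ K.faces) : C(L.space, K.space) where
  toFun f := ⟨f.1, f.2.1, by obtain ⟨s, hs, h1, h2⟩ := f.2.2; exact ⟨s, h hs, h1, h2⟩⟩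
  continuous_toFun := Continuous.subtype_mk continuous_subtype_val _

variable [DecidableEq V]

/-- The link of a vertex. -/
def link (K : AbsSC V) (v : V) : AbsSC V where
  faces := {σ | σ ≠ ∅ ∧ v ∉ σ ∧ σ ∪ {v} ∈ K.faces}
  not_empty_mem h := h.1 rfl
  down_closed := by
    rintro s ⟨hne, hv, hs⟩ t hts htne
    exact ⟨htne, fun hvt => hv (hts hvt),
      K.down_closed _ hs _ (Finset.union_subset_union hts (Finset.Subset.refl _)) (by simp [Finset.union_eq_empty])⟩

lemma link_subset (K : AbsSC V) (v : V) : (K.link v).faces ⊆ K.faces := by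
  rintro σ ⟨hne, hv, hσ⟩
  exact K.down_closed _ hσ _ Finset.subset_union_left hne

/-- The complex induced on the vertices other than `v`. -/
def delete (K : AbsSC V) (v : V) : AbsSC V where
  faces := {σ | σ ∈ K.faces ∧ v ∉ σ}
  not_empty_mem h := K.not_empty_mem h.1
  down_closed := by
    rintro s ⟨hs, hv⟩ t hts htne
    exact ⟨K.down_closed _ hs _ hts htne, fun h => hv (hts h)⟩

/-- The star of a vertex: `st_K(v) = {σ : σ ∪ {v} ∈ K}`. -/
def star (K : AbsSC V) (v : V) : AbsSC V where
  faces := {σ | σ ≠ ∅ ∧ σ ∪ {v} ∈ K.faces}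
  not_empty_mem h := h.1 rfl
  down_closed := by
    rintro s ⟨hne, hs⟩ t hts htne
    exact ⟨htne,
      K.down_closed _ hs _ (Finset.union_subset_union hts (Finset.Subset.refl _)) (by simp [Finset.union_eq_empty])⟩

/-- The star cluster of a subcomplex `L` in `K`: the union of stars of vertices of `L`. -/
def starCluster (K L : AbsSC V) : AbsSC V where
  faces := {σ | σ ≠ ∅ ∧ ∃ v, ({v} : Finset V) ∈ L.faces ∧ σ ∪ {v} ∈ K.faces}
  not_empty_mem h := h.1 rfl
  down_closed := by
    rintro s ⟨hne, v, hvL, hs⟩ t hts htne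
    exact ⟨htne, v, hvL,
      K.down_closed _ hs _ (Finset.union_subset_union hts (Finset.Subset.refl _)) (by simp [Finset.union_eq_empty])⟩

/-- The union of two simplicial complexes. -/
def union (K₁ K₂ : AbsSC V) : AbsSC V where
  faces := K₁.faces ∪ K₂.faces
  not_empty_mem h := by
    rcases h with h | h
    exacts [K₁.not_empty_mem h, K₂.not_empty_mem h]
  down_closed := by
    rintro s (hs | hs) t hts htne
    exacts [Or.inl (K₁.down_closed _ hs _ hts htne), Or.inr (K₂.down_closed _ hs _ hts htne)]

/-- The union of a family of simplicial complexes. -/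
def iUnionC {ι : Type} (F : ι → AbsSC V) : AbsSC V where
  faces := ⋃ i, (F i).faces
  not_empty_mem h := by
    obtain ⟨i, hi⟩ := Set.mem_iUnion.mp h
    exact (F i).not_empty_mem hi
  down_closed := by
    intro s hs t hts htne
    obtain ⟨i, hi⟩ := Set.mem_iUnion.mp hs
    exact Set.mem_iUnion.mpr ⟨i, (F i).down_closed _ hi _ hts htne⟩

/-- The `n`-skeleton of a complex: all faces with at most `n+1` vertices. -/
def skeleton (K : AbsSC V) (n : ℕ) : AbsSC V where
  faces := {σ | σ ∈ K.faces ∧ σ.card ≤ n + 1}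
  not_empty_mem h := K.not_empty_mem h.1
  down_closed := by
    rintro s ⟨hs, hcard⟩ t hts htne
    exact ⟨K.down_closed _ hs _ hts htne, le_trans (Finset.card_le_card hts) hcard⟩

/-- The simplicial complex generated by a single simplex `s` (all its nonempty subsets). -/
def simplexCx (s : Finset V) : AbsSC V where
  faces := {t | t ≠ ∅ ∧ t ⊆ s}
  not_empty_mem h := h.1 rfl
  down_closed := by
    rintro a ⟨hne, has⟩ t hta htne
    exact ⟨htne, hta.trans has⟩

/-- A maximal simplex (facet) of `K`. -/
def IsFacet (K : AbsSC V) (σ : Finset V) : Prop :=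
  σ ∈ K.faces ∧ ∀ τ ∈ K.faces, σ ⊆ τ → τ = σ

/-- `K` is a clique complex: any nonempty set of vertices which pairwise span edges is a face. -/
def IsCliqueCx (K : AbsSC V) : Prop :=
  ∀ σ : Finset V, σ ≠ ∅ → (∀ v ∈ σ, ({v} : Finset V) ∈ K.faces) →
    (∀ v ∈ σ, ∀ w ∈ σ, v ≠ w → ({v, w} : Finset V) ∈ K.faces) → σ ∈ K.faces

/-- `L` is a full subcomplex of `K`. -/
def IsFull (L K : AbsSC V) : Prop :=
  ∀ σ ∈ K.faces, (∀ v ∈ σ, ({v} : Finset V) ∈ L.faces) → σ ∈ L.faces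

end AbsSC

noncomputable section

/-- The `n`-dimensional sphere. -/
abbrev Sph (n : ℕ) : Type := Metric.sphere (0 : EuclideanSpace ℝ (Fin (n + 1))) 1

/-- A base point on the sphere. -/
def sphBase (n : ℕ) : Sph n :=
  ⟨EuclideanSpace.single 0 1, by simp⟩

/-- Relation gluing the base points of `c` copies of a pointed space to an auxiliary point. -/
inductive wedgeRel (c : ℕ) (X : Type) (x₀ : X) : Unit ⊕ Fin c × X → Unit ⊕ Fin c × X → Prop
  | glue (i : Fin c) : wedgeRel c X x₀ (Sum.inl ()) (Sum.inr (i, x₀))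

/-- The wedge sum of `c` copies of the pointed space `(X, x₀)`. -/
def Wedge (c : ℕ) (X : Type) [TopologicalSpace X] (x₀ : X) : Type := Quot (wedgeRel c X x₀)

instance (c : ℕ) (X : Type) [TopologicalSpace X] (x₀ : X) : TopologicalSpace (Wedge c X x₀) := by
  unfold Wedge; infer_instance

/-- The base point of the wedge. -/
def wedgePt (c : ℕ) (X : Type) [TopologicalSpace X] (x₀ : X) : Wedge c X x₀ :=
  Quot.mk _ (Sum.inl ())

/-- The wedge sum of `c` copies of the `n`-sphere. -/
abbrev WedgeSph (n c : ℕ) : Type := Wedge c (Sph n) (sphBase n)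

/-- The base point of a wedge of spheres. -/
def wedgeSphPt (n c : ℕ) : WedgeSph n c := wedgePt c _ _

/-- Relation gluing the two base points in a binary wedge. -/
inductive wedge2Rel (X Y : Type) (x₀ : X) (y₀ : Y) : X ⊕ Y → X ⊕ Y → Prop
  | glue : wedge2Rel X Y x₀ y₀ (Sum.inl x₀) (Sum.inr y₀)

/-- The wedge sum `X ∨ Y` of two pointed spaces. -/
def Wedge2 (X Y : Type) [TopologicalSpace X] [TopologicalSpace Y] (x₀ : X) (y₀ : Y) : Type :=
  Quot (wedge2Rel X Y x₀ y₀)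

instance (X Y : Type) [TopologicalSpace X] [TopologicalSpace Y] (x₀ : X) (y₀ : Y) :
    TopologicalSpace (Wedge2 X Y x₀ y₀) := by unfold Wedge2; infer_instance

/-- Relation collapsing the top and bottom of the cylinder `X × [0,1]` to two cone points. -/
inductive suspRel (X : Type) : X × unitInterval ⊕ Bool → X × unitInterval ⊕ Bool → Prop
  | zero (x : X) : suspRel X (Sum.inl (x, 0)) (Sum.inr false)
  | one (x : X) : suspRel X (Sum.inl (x, 1)) (Sum.inr true)

/-- The (unreduced) suspension `Σ X`. -/
def Susp (X : Type) [TopologicalSpace X] : Type := Quot (suspRel X)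

instance (X : Type) [TopologicalSpace X] : TopologicalSpace (Susp X) := by
  unfold Susp; infer_instance

/-- The north cone point of the suspension. -/
def suspNorth (X : Type) [TopologicalSpace X] : Susp X := Quot.mk _ (Sum.inr true)

end

/-- The Vietoris–Rips complex at scale `r` of a collection `F` of finite subsets of `ℕ`,
with respect to the symmetric difference metric `d(A,B) = |A Δ B|`. -/
def VRc (F : Set (Finset ℕ)) (r : ℕ) : AbsSC (Finset ℕ) where
  faces := {σ | σ.Nonempty ∧ (∀ A ∈ σ, A ∈ F) ∧
    ∀ A ∈ σ, ∀ B ∈ σ, (symmDiff A B).card ≤ r}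
  not_empty_mem h := by simpa using h.1
  down_closed := by
    rintro s ⟨hne, hF, hd⟩ t hts htne
    exact ⟨Finset.nonempty_iff_ne_empty.mpr htne, fun A hA => hF A (hts hA),
      fun A hA B hB => hd A (hts hA) B (hts hB)⟩

/-- `F_n^m`: all `n`-element subsets of `[m] = {1, …, m}`. -/
def Fnm (m n : ℕ) : Set (Finset ℕ) := {A | A ⊆ Finset.Icc 1 m ∧ A.card = n}

/-- `F_{≤ n}^m`: all subsets of `[m]` of cardinality at most `n`. -/
def Fle (m n : ℕ) : Set (Finset ℕ) := {A | A ⊆ Finset.Icc 1 m ∧ A.card ≤ n}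

/-- The simplex `N[C] = {A : C ⊆ A, |A \ C| = 1}` inside `[m]`. -/
def NSimp (m : ℕ) (C : Finset ℕ) : Finset (Finset ℕ) :=
  (Finset.Icc 1 m \ C).image (fun x => insert x C)

/-- The simplex `L[S]`: all subsets of `S` obtained by removing one element. -/
def LSimp (S : Finset ℕ) : Finset (Finset ℕ) := S.image (fun x => S.erase x)

/-- The total order `≺`: first compare cardinalities, then compare the increasing
enumerations lexicographically. -/
def precLT (A B : Finset ℕ) : Prop :=
  A.card < B.card ∨
    (A.card = B.card ∧ List.Lex (· < ·) (A.sort (· ≤ ·)) (B.sort (· ≤ ·)))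

/-- `A ⪯ B`. -/
def precLE (A B : Finset ℕ) : Prop := precLT A B ∨ A = B

/-- `F^m_{≺ A}`: all subsets of `[m]` strictly preceding `A`. -/
def FprecLT (m : ℕ) (A : Finset ℕ) : Set (Finset ℕ) :=
  {B | B ⊆ Finset.Icc 1 m ∧ precLT B A}

/-- `F^m_{⪯ A}`: all subsets of `[m]` preceding (or equal to) `A`. -/
def FprecLE (m : ℕ) (A : Finset ℕ) : Set (Finset ℕ) :=
  {B | B ⊆ Finset.Icc 1 m ∧ precLE B A}

/-- The `j`-th value (0-indexed) of an enumeration `i : Fin n → ℕ`. -/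
def ith {n : ℕ} (i : Fin n → ℕ) (j : ℕ) : ℕ := if h : j < n then i ⟨j, h⟩ else 0

/-- The `ℓ`-th entry (1-indexed) of the enumeration, as an integer, with `i_0 = -1`. -/
def ivZ {n : ℕ} (i : Fin n → ℕ) (ℓ : ℕ) : ℤ := if ℓ = 0 then -1 else (ith i (ℓ - 1) : ℤ)

/-- For `B = i_1 i_2 ⋯ i_n` (increasing), with `d_1 = i_1` and
`d_ℓ = i_ℓ - (i_{ℓ-1} + 1)`, `r_B = Σ_{k=2}^{n-2} C(k,2) + Σ_{ℓ=1}^{n-2} d_ℓ·C(n-ℓ,2)`. -/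
def rA (B : Finset ℕ) : ℕ :=
  (∑ k ∈ Finset.Icc 2 (B.card - 2), Nat.choose k 2) +
    ∑ ℓ ∈ Finset.Icc 1 (B.card - 2),
      ((B.sort (· ≤ ·)).getD (ℓ - 1) 0 -
        (if ℓ = 1 then 0 else (B.sort (· ≤ ·)).getD (ℓ - 2) 0 + 1)) * Nat.choose (B.card - ℓ) 2

/-- For `B = i_1 i_2 ⋯ i_n` (increasing), with `c_1 = i_1 - 1` and
`c_ℓ = i_ℓ - (i_{ℓ-1} + 1)`, `s_B = Σ_{k=2}^{n-2} C(k,2) + Σ_{ℓ=1}^{n-2} c_ℓ·C(n-ℓ,2)`. -/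
def sA (B : Finset ℕ) : ℕ :=
  (∑ k ∈ Finset.Icc 2 (B.card - 2), Nat.choose k 2) +
    ∑ ℓ ∈ Finset.Icc 1 (B.card - 2),
      ((B.sort (· ≤ ·)).getD (ℓ - 1) 0 -
        (if ℓ = 1 then 1 else (B.sort (· ≤ ·)).getD (ℓ - 2) 0 + 1)) * Nat.choose (B.card - ℓ) 2

/-- `t_n = Σ_{A ⊆ [m], |A| = n} r_A`. -/
def tN (m n : ℕ) : ℕ :=
  ∑ A ∈ (Finset.Icc 1 m).powerset.filter (fun A => A.card = n), rA A

/-- `o_{m,n} = Σ { s_A : A ∈ F^m_{n+2}, min A ≥ 2 }`. -/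
def omn (m n : ℕ) : ℕ :=
  ∑ A ∈ (Finset.Icc 1 m).powerset.filter (fun A => A.card = n + 2 ∧ ∀ x ∈ A, 2 ≤ x), sA A
set_option linter.unusedSectionVars false
namespace Collapse

open Finset

variable {V : Type} [DecidableEq V] (C : AbsSC V) (τ : Finset V) (a : V)

/-- min of f over τ -/
noncomputable def mv (hτ : τ.Nonempty) (f : C.space) : ℝ := τ.inf' hτ f.1

variable (hτ : τ.Nonempty)

lemma mv_nonneg (f : C.space) : 0 ≤ mv C τ hτ f :=
  Finset.le_inf' _ _ fun t _ => f.2.1 t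

lemma mv_le (f : C.space) {t : V} (ht : t ∈ τ) : mv C τ hτ f ≤ f.1 t :=
  Finset.inf'_le _ ht

lemma D_pos (f : C.space) : 0 < 1 + (τ.card : ℝ) * mv C τ hτ f := by
  have := mv_nonneg C τ hτ f
  positivity

lemma cont_mv : Continuous (mv C τ hτ) :=
  Continuous.finset_inf'_apply hτ fun i _ => (continuous_apply i).comp continuous_subtype_val

/-- the projection map pushing `f` away from the free face -/
noncomputable def rf (f : C.space) : V → ℝ := fun w =>
  if w ∈ τ then (f.1 w - mv C τ hτ f) / (1 + (τ.card : ℝ) * mv C τ hτ f)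
  else if w = a then (f.1 a + 2 * (τ.card : ℝ) * mv C τ hτ f) / (1 + (τ.card : ℝ) * mv C τ hτ f)
  else 0

lemma cont_rf : Continuous (rf C τ a hτ) := by
  apply continuous_pi
  intro w
  unfold rf
  by_cases hw : w ∈ τ
  · simp only [if_pos hw]
    exact (((continuous_apply w).comp continuous_subtype_val).sub (cont_mv C τ hτ)).div
      (continuous_const.add (continuous_const.mul (cont_mv C τ hτ)))
      (fun f => (D_pos C τ hτ f).ne')
  · simp only [if_neg hw]
    by_cases hwa : w = a
    · simp only [if_pos hwa]
      exact (((continuous_apply a).comp continuous_subtype_val).add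
        ((continuous_const.mul (cont_mv C τ hτ)))).div
        (continuous_const.add (continuous_const.mul (cont_mv C τ hτ)))
        (fun f => (D_pos C τ hτ f).ne')
    · simp only [if_neg hwa]
      exact continuous_const

lemma rf_nonneg (f : C.space) (w : V) : 0 ≤ rf C τ a hτ f w := by
  unfold rf
  split_ifs with h1 h2
  · exact div_nonneg (sub_nonneg.mpr (mv_le C τ hτ f h1)) (D_pos C τ hτ f).le
  · have h1 := f.2.1 a
    have h2 := mv_nonneg C τ hτ f
    have : (0:ℝ) ≤ (τ.card : ℝ) := Nat.cast_nonneg _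
    exact div_nonneg (by positivity) (D_pos C τ hτ f).le
  · exact le_refl 0

lemma rf_supp_subset (f : C.space) (w : V) (hw : rf C τ a hτ f w ≠ 0) : w ∈ insert a τ := by
  unfold rf at hw
  split_ifs at hw with h1 h2
  · exact Finset.mem_insert_of_mem h1
  · exact h2 ▸ Finset.mem_insert_self a τ
  · exact absurd rfl hw

lemma rf_eq_of_mv_zero (f : C.space) (hm : mv C τ hτ f = 0)
    (hp : ∀ w, w ∉ insert a τ → f.1 w = 0) : rf C τ a hτ f = f.1 := by
  funext w
  unfold rf
  rw [hm]
  split_ifs with h1 h2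
  · simp
  · subst h2; simp
  · exact (hp w (by simp [Finset.mem_insert, h1, h2])).symm

end Collapse

namespace Collapse

open Finset

variable {V : Type} [DecidableEq V] (C : AbsSC V) (τ : Finset V) (a : V) (hτ : τ.Nonempty)

lemma sum_eq_one (f : C.space) (hp : ∀ w, w ∉ insert a τ → f.1 w = 0) :
    ∑ w ∈ insert a τ, f.1 w = 1 := by
  obtain ⟨s, hs, hsupp, hsum⟩ := f.2.2
  have h1 : ∑ w ∈ (insert a τ) ∩ s, f.1 w = ∑ w ∈ insert a τ, f.1 w :=
    Finset.sum_subset Finset.inter_subset_left (fun x hx hx2 => by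
      by_contra h
      exact hx2 (Finset.mem_inter.mpr ⟨hx, hsupp x h⟩))
  have h2 : ∑ w ∈ (insert a τ) ∩ s, f.1 w = ∑ w ∈ s, f.1 w :=
    Finset.sum_subset Finset.inter_subset_right (fun x hx hx2 => by
      refine hp x fun hxσ => hx2 (Finset.mem_inter.mpr ⟨hxσ, hx⟩))
  rw [← h1, h2, hsum]

lemma rf_face (ha : a ∉ τ) (hσ : insert a τ ∈ C.faces) (f : C.space)
    (hp : ∀ w, w ∉ insert a τ → f.1 w = 0) :
    ∃ s' ∈ C.faces, s' ≠ τ ∧ s' ≠ insert a τ ∧ (∀ v, rf C τ a hτ f v ≠ 0 → v ∈ s') ∧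
      (∑ v ∈ s', rf C τ a hτ f v = 1) ∧ ∑ v ∈ insert a τ, rf C τ a hτ f v = 1 := by
  obtain ⟨t₀, ht₀, hinf⟩ := Finset.exists_mem_eq_inf' hτ f.1
  have hat₀ : a ≠ t₀ := fun h => ha (h ▸ ht₀)
  set s' : Finset V := insert a (τ.erase t₀) with hs'def
  have hsub : s' ⊆ insert a τ := Finset.insert_subset_insert a (Finset.erase_subset _ _)
  have hces : s' ∈ C.faces :=
    C.down_closed _ hσ _ hsub (Finset.ne_empty_of_mem (Finset.mem_insert_self a _))
  have hne1 : s' ≠ τ := fun h => ha (h ▸ Finset.mem_insert_self a _)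
  have hne2 : s' ≠ insert a τ := by
    intro h
    have ht₀s : t₀ ∈ s' := h ▸ Finset.mem_insert_of_mem ht₀
    rcases Finset.mem_insert.mp ht₀s with h' | h'
    · exact hat₀ h'.symm
    · exact (Finset.mem_erase.mp h').1 rfl
  have hrft₀ : rf C τ a hτ f t₀ = 0 := by
    unfold rf
    rw [if_pos ht₀]
    have : f.1 t₀ - mv C τ hτ f = 0 := by
      unfold mv; rw [hinf]; ring
    rw [this, zero_div]
  have hsupp : ∀ v, rf C τ a hτ f v ≠ 0 → v ∈ s' := by
    intro v hv
    rcases Finset.mem_insert.mp (rf_supp_subset C τ a hτ f v hv) with h' | h'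
    · exact h' ▸ Finset.mem_insert_self a _
    · by_cases hvt : v = t₀
      · exact absurd (hvt ▸ hv) (by rw [hrft₀]; simp)
      · exact Finset.mem_insert_of_mem (Finset.mem_erase.mpr ⟨hvt, h'⟩)
  have haerase : a ∉ τ.erase t₀ := fun h => ha (Finset.mem_of_mem_erase h)
  have hsum' : ∑ v ∈ s', rf C τ a hτ f v = 1 := by
    rw [hs'def, Finset.sum_insert haerase]
    have herase : ∀ w ∈ τ.erase t₀, rf C τ a hτ f w
        = (f.1 w - mv C τ hτ f) / (1 + (τ.card : ℝ) * mv C τ hτ f) := by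
      intro w hw
      unfold rf
      rw [if_pos (Finset.mem_of_mem_erase hw)]
    rw [Finset.sum_congr rfl herase]
    have hrfa : rf C τ a hτ f a
        = (f.1 a + 2 * (τ.card : ℝ) * mv C τ hτ f) / (1 + (τ.card : ℝ) * mv C τ hτ f) := by
      unfold rf
      rw [if_neg ha, if_pos rfl]
    rw [hrfa, ← Finset.sum_div]
    have e1 : ∑ w ∈ τ.erase t₀, (f.1 w - mv C τ hτ f)
        = (∑ w ∈ τ, (f.1 w - mv C τ hτ f)) - (f.1 t₀ - mv C τ hτ f) :=
      Finset.sum_erase_eq_sub ht₀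
    have e2 : ∑ w ∈ τ, (f.1 w - mv C τ hτ f) = (∑ w ∈ τ, f.1 w) - (τ.card : ℝ) * mv C τ hτ f := by
      rw [Finset.sum_sub_distrib, Finset.sum_const, nsmul_eq_mul]
    have e3 : f.1 t₀ - mv C τ hτ f = 0 := by unfold mv; rw [hinf]; ring
    have hone : f.1 a + ∑ w ∈ τ, f.1 w = 1 := by
      have := sum_eq_one C τ a f hp
      rwa [Finset.sum_insert ha] at this
    rw [e1, e2, e3, ← add_div]
    rw [div_eq_one_iff_eq (D_pos C τ hτ f).ne']
    linarith
  have hsumσ : ∑ v ∈ insert a τ, rf C τ a hτ f v = 1 := by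
    have hσs : insert a τ = insert t₀ s' := by
      rw [hs'def, Finset.insert_comm, Finset.insert_erase ht₀]
    have ht₀s' : t₀ ∉ s' := by
      simp only [hs'def, Finset.mem_insert, Finset.mem_erase]
      push_neg
      exact ⟨fun h => absurd h.symm hat₀, fun h => absurd rfl h⟩
    rw [hσs, Finset.sum_insert ht₀s', hrft₀, zero_add, hsum']
  exact ⟨s', hces, hne1, hne2, hsupp, hsum', hsumσ⟩

end Collapse

namespace Collapse

open Finset

variable {V : Type} [DecidableEq V] (C : AbsSC V) (τ : Finset V) (a : V) (hτ : τ.Nonempty)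

open Classical in
/-- the global retraction, as a bare function -/
noncomputable def R0 (f : C.space) : V → ℝ :=
  if ∀ w ∉ insert a τ, f.1 w = 0 then rf C τ a hτ f else f.1

lemma R0_nonneg (f : C.space) (v : V) : 0 ≤ R0 C τ a hτ f v := by
  unfold R0
  split_ifs
  · exact rf_nonneg C τ a hτ f v
  · exact f.2.1 v

open Classical in
lemma cont_R0 (hfree : ∀ ρ ∈ C.faces, τ ⊆ ρ → ρ = τ ∨ ρ = insert a τ) :
    Continuous (R0 C τ a hτ) := by
  unfold R0
  refine Continuous.if ?_ (cont_rf C τ a hτ) continuous_subtype_val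
  intro f hf
  have hA : IsClosed {f : C.space | ∀ w ∉ insert a τ, f.1 w = 0} := by
    have he : {f : C.space | ∀ w ∉ insert a τ, f.1 w = 0}
        = ⋂ w ∈ {w : V | w ∉ insert a τ}, {f : C.space | f.1 w = 0} := by
      ext g; simp
    rw [he]
    have hc : ∀ w : V, Continuous fun f : C.space => f.1 w :=
      fun w => (continuous_apply w).comp continuous_subtype_val
    exact isClosed_biInter fun w _ => isClosed_eq (hc w) continuous_const
  have hfA : ∀ w ∉ insert a τ, f.1 w = 0 := hA.frontier_subset hf
  have hm : mv C τ hτ f = 0 := by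
    by_contra hm
    have hmpos : 0 < mv C τ hτ f := lt_of_le_of_ne (mv_nonneg C τ hτ f) (Ne.symm hm)
    have hU : IsOpen {g : C.space | ∀ t ∈ τ, 0 < g.1 t} := by
      have he : {g : C.space | ∀ t ∈ τ, 0 < g.1 t} = ⋂ t ∈ τ, {g : C.space | 0 < g.1 t} := by
        ext g; simp
      rw [he]
      have hc : ∀ t : V, Continuous fun g : C.space => g.1 t :=
        fun t => (continuous_apply t).comp continuous_subtype_val
      exact isOpen_biInter_finset fun t _ => isOpen_lt continuous_const (hc t)
    have hUA : {g : C.space | ∀ t ∈ τ, 0 < g.1 t} ⊆ {f : C.space | ∀ w ∉ insert a τ, f.1 w = 0} := by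
      intro g hg w hw
      by_contra hgw
      obtain ⟨s, hs, hsupp, _⟩ := g.2.2
      have hτs : τ ⊆ s := fun t ht => hsupp t (ne_of_gt (hg t ht))
      have hws : w ∈ s := hsupp w hgw
      rcases hfree s hs hτs with h | h
      · exact hw (Finset.mem_insert_of_mem (h ▸ hws))
      · exact hw (h ▸ hws)
    have hfU : f ∈ {g : C.space | ∀ t ∈ τ, 0 < g.1 t} :=
      fun t ht => lt_of_lt_of_le hmpos (mv_le C τ hτ f ht)
    exact hf.2 (interior_maximal hUA hU hfU)
  exact rf_eq_of_mv_zero C τ a hτ f hm hfA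

include hτ in
open Classical in
theorem collapse_hequiv (C' : AbsSC V)
    (ha : a ∉ τ) (hσ : insert a τ ∈ C.faces)
    (hC' : C'.faces = C.faces \ {τ, insert a τ})
    (hfree : ∀ ρ ∈ C.faces, τ ⊆ ρ → ρ = τ ∨ ρ = insert a τ) :
    Nonempty (ContinuousMap.HomotopyEquiv C.space C'.space) := by
  have hsub : C'.faces ⊆ C.faces := by rw [hC']; exact Set.diff_subset
  have hmem : ∀ f : C.space, (∀ v, 0 ≤ R0 C τ a hτ f v) ∧
      ∃ s ∈ C'.faces, (∀ v, R0 C τ a hτ f v ≠ 0 → v ∈ s) ∧ ∑ v ∈ s, R0 C τ a hτ f v = 1 := by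
    intro f
    refine ⟨R0_nonneg C τ a hτ f, ?_⟩
    unfold R0
    split_ifs with hp
    · obtain ⟨s', hs', hne1, hne2, hsupp, hsum, _⟩ := rf_face C τ a hτ ha hσ f hp
      refine ⟨s', ?_, hsupp, hsum⟩
      rw [hC']
      exact ⟨hs', by simp [hne1, hne2]⟩
    · obtain ⟨s, hs, hsupp, hsum⟩ := f.2.2
      have hsC' : s ∈ C'.faces := by
        rw [hC']
        refine ⟨hs, fun hmem2 => hp fun w hw => ?_⟩
        by_contra hfw
        have hws := hsupp w hfw
        rcases hmem2 with h | h
        · exact hw (Finset.mem_insert_of_mem (by rw [← h]; exact hws))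
        · simp only [Set.mem_singleton_iff] at h
          exact hw (by rw [← h]; exact hws)
      exact ⟨s, hsC', hsupp, hsum⟩
  let R : C(C.space, C'.space) :=
    ⟨fun f => ⟨R0 C τ a hτ f, hmem f⟩, (cont_R0 C τ a hτ hfree).subtype_mk _⟩
  let I' : C(C'.space, C.space) := AbsSC.incl hsub
  have hRI : R.comp I' = ContinuousMap.id C'.space := by
    apply ContinuousMap.ext
    intro f
    apply Subtype.ext
    show R0 C τ a hτ (I' f) = f.1
    unfold R0
    split_ifs with hp
    · apply rf_eq_of_mv_zero C τ a hτ (I' f) ?_ hp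
      by_contra hm
      have hmpos : 0 < mv C τ hτ (I' f) :=
        lt_of_le_of_ne (mv_nonneg C τ hτ (I' f)) (Ne.symm hm)
      obtain ⟨s, hs, hsupp, _⟩ := f.2.2
      have hτs : τ ⊆ s := fun t ht =>
        hsupp t (ne_of_gt (lt_of_lt_of_le hmpos (mv_le C τ hτ (I' f) ht)))
      rw [hC'] at hs
      rcases hfree s hs.1 hτs with h | h
      · exact hs.2 (by rw [h]; simp)
      · exact hs.2 (by rw [h]; simp)
    · rfl
  -- the straight-line homotopy from id to I' ∘ R
  have hcomboMem : ∀ (q : unitInterval × C.space), (∀ v, 0 ≤ (1 - (q.1 : ℝ)) * q.2.1 v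
        + (q.1 : ℝ) * R0 C τ a hτ q.2 v) ∧
      ∃ s ∈ C.faces, (∀ v, (1 - (q.1 : ℝ)) * q.2.1 v + (q.1 : ℝ) * R0 C τ a hτ q.2 v ≠ 0 → v ∈ s)
        ∧ ∑ v ∈ s, ((1 - (q.1 : ℝ)) * q.2.1 v + (q.1 : ℝ) * R0 C τ a hτ q.2 v) = 1 := by
    rintro ⟨t, f⟩
    have ht0 : (0:ℝ) ≤ (t : ℝ) := t.2.1
    have ht1 : (t : ℝ) ≤ 1 := t.2.2
    constructor
    · intro v
      exact add_nonneg (mul_nonneg (by linarith) (f.2.1 v))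
        (mul_nonneg ht0 (R0_nonneg C τ a hτ f v))
    · by_cases hp : ∀ w ∉ insert a τ, f.1 w = 0
      · obtain ⟨s', hs', hne1, hne2, hsupp, hsum, hsumσ⟩ := rf_face C τ a hτ ha hσ f hp
        have hR0 : R0 C τ a hτ f = rf C τ a hτ f := by unfold R0; rw [if_pos hp]
        refine ⟨insert a τ, hσ, ?_, ?_⟩
        · intro v hv
          by_contra hvσ
          have h1 := hp v hvσ
          have h2 : rf C τ a hτ f v = 0 := by
            by_contra h2
            exact hvσ (rf_supp_subset C τ a hτ f v h2)
          rw [hR0, h1, h2] at hv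
          simp at hv
        · rw [hR0]
          rw [Finset.sum_add_distrib, ← Finset.mul_sum, ← Finset.mul_sum,
            sum_eq_one C τ a f hp, hsumσ]
          ring
      · have hR0 : R0 C τ a hτ f = f.1 := by unfold R0; rw [if_neg hp]
        obtain ⟨s, hs, hsupp, hsum⟩ := f.2.2
        refine ⟨s, hs, ?_, ?_⟩
        · intro v hv
          apply hsupp
          intro h0
          rw [hR0, h0] at hv
          simp at hv
        · rw [hR0]
          rw [Finset.sum_add_distrib, ← Finset.mul_sum, ← Finset.mul_sum, hsum]
          ring
  let Hmap : C(unitInterval × C.space, C.space) :=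
    ⟨fun q => ⟨fun w => (1 - (q.1 : ℝ)) * q.2.1 w + (q.1 : ℝ) * R0 C τ a hτ q.2 w, hcomboMem q⟩, by
      apply Continuous.subtype_mk
      apply continuous_pi
      intro w
      have tcont : Continuous fun q : unitInterval × C.space => (q.1 : ℝ) :=
        continuous_subtype_val.comp continuous_fst
      have fcont : Continuous fun q : unitInterval × C.space => q.2.1 w :=
        (continuous_apply w).comp (continuous_subtype_val.comp continuous_snd)
      have rcont : Continuous fun q : unitInterval × C.space => R0 C τ a hτ q.2 w :=
        (continuous_apply w).comp ((cont_R0 C τ a hτ hfree).comp continuous_snd)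
      exact ((continuous_const.sub tcont).mul fcont).add (tcont.mul rcont)⟩
  have H : (ContinuousMap.id C.space).Homotopy (I'.comp R) := by
    refine ⟨Hmap, ?_, ?_⟩
    · intro f
      apply Subtype.ext
      funext w
      show (1 - ((0 : unitInterval) : ℝ)) * f.1 w + ((0 : unitInterval) : ℝ) * _ = f.1 w
      norm_num
    · intro f
      apply Subtype.ext
      funext w
      show (1 - ((1 : unitInterval) : ℝ)) * f.1 w + ((1 : unitInterval) : ℝ)
          * R0 C τ a hτ f w = R0 C τ a hτ f w
      norm_num
  refine ⟨⟨R, I', ⟨H.symm⟩, ?_⟩⟩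
  rw [hRI]

end Collapse

namespace Comb

open Finset

/-- `S₁`: the `n`-subsets of `[m]` containing `1`. -/
def S1 (m n : ℕ) : Set (Finset ℕ) := {A | A ⊆ Finset.Icc 1 m ∧ A.card = n ∧ 1 ∈ A}

/-- scale-2 VR complex on `F_n^m` -/
def Kc (m n : ℕ) : AbsSC (Finset ℕ) := VRc (Fnm m n) 2
/-- scale-2 VR complex on `S₁` -/
def Lc (m n : ℕ) : AbsSC (Finset ℕ) := VRc (S1 m n) 2
/-- the star cluster -/
def SCc (m n : ℕ) : AbsSC (Finset ℕ) := (Kc m n).starCluster (Lc m n)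

variable {m n : ℕ}

lemma sdiff_card_one {A u : Finset ℕ} (hc : A.card = u.card) (h1A : (1:ℕ) ∉ A) (h1u : 1 ∈ u)
    (hd : (symmDiff A u).card ≤ 2) : u \ A = {1} ∧ (A \ u).card = 1 := by
  have hdisj : Disjoint (A \ u) (u \ A) := disjoint_sdiff_sdiff
  have hcardsum : (symmDiff A u).card = (A \ u).card + (u \ A).card := by
    rw [symmDiff_def, Finset.sup_eq_union, Finset.card_union_of_disjoint hdisj]
  have hAu := Finset.card_sdiff_add_card_inter A u
  have huA := Finset.card_sdiff_add_card_inter u A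
  have hint : (A ∩ u).card = (u ∩ A).card := by rw [Finset.inter_comm]
  have heq : (A \ u).card = (u \ A).card := by omega
  have h1m : (1:ℕ) ∈ u \ A := Finset.mem_sdiff.mpr ⟨h1u, h1A⟩
  have h1le : 1 ≤ (u \ A).card := Finset.card_pos.mpr ⟨1, h1m⟩
  have hcard1 : (u \ A).card = 1 := by omega
  obtain ⟨x, hx⟩ := Finset.card_eq_one.mp hcard1
  have : (1:ℕ) = x := Finset.mem_singleton.mp (hx ▸ h1m)
  exact ⟨by rw [hx, ← this], by omega⟩

lemma close_of_common {A u v : Finset ℕ} (hcu : A.card = u.card) (hcv : A.card = v.card)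
    (h1A : (1:ℕ) ∉ A) (h1u : 1 ∈ u) (h1v : 1 ∈ v)
    (hdu : (symmDiff A u).card ≤ 2) (hdv : (symmDiff A v).card ≤ 2) :
    (symmDiff u v).card ≤ 2 := by
  obtain ⟨huA, hAu⟩ := sdiff_card_one hcu h1A h1u hdu
  obtain ⟨hvA, hAv⟩ := sdiff_card_one hcv h1A h1v hdv
  obtain ⟨au, hau⟩ := Finset.card_eq_one.mp hAu
  obtain ⟨av, hav⟩ := Finset.card_eq_one.mp hAv
  have claim1 : u \ v ⊆ {av} := by
    intro x hx
    obtain ⟨hxu, hxv⟩ := Finset.mem_sdiff.mp hx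
    by_cases hxA : x ∈ A
    · exact hav ▸ Finset.mem_sdiff.mpr ⟨hxA, hxv⟩
    · have : x ∈ u \ A := Finset.mem_sdiff.mpr ⟨hxu, hxA⟩
      rw [huA, Finset.mem_singleton] at this
      exact absurd (this ▸ h1v) hxv
  have claim2 : v \ u ⊆ {au} := by
    intro x hx
    obtain ⟨hxv, hxu⟩ := Finset.mem_sdiff.mp hx
    by_cases hxA : x ∈ A
    · exact hau ▸ Finset.mem_sdiff.mpr ⟨hxA, hxu⟩
    · have : x ∈ v \ A := Finset.mem_sdiff.mpr ⟨hxv, hxA⟩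
      rw [hvA, Finset.mem_singleton] at this
      exact absurd (this ▸ h1u) hxu
  calc (symmDiff u v).card = (u \ v ∪ v \ u).card := by rw [symmDiff_def, Finset.sup_eq_union]
    _ ≤ (u \ v).card + (v \ u).card := Finset.card_union_le _ _
    _ ≤ 1 + 1 := Nat.add_le_add
        (le_trans (Finset.card_le_card claim1) (by simp))
        (le_trans (Finset.card_le_card claim2) (by simp))
    _ ≤ 2 := le_refl 2

/-- common `S₁`-neighbours of a face -/
def VsetD (m n : ℕ) (σ : Finset (Finset ℕ)) : Set (Finset ℕ) :=
  {v | v ∈ S1 m n ∧ σ ∪ {v} ∈ (Kc m n).faces}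

open Classical Encodable in
/-- the minimal common `S₁`-neighbour (minimal in the encoding order) -/
noncomputable def vS (m n : ℕ) (σ : Finset (Finset ℕ)) : Finset ℕ :=
  if h : (VsetD m n σ).Nonempty then (Nat.sInf_mem (h.image Encodable.encode)).choose else ∅

open Classical Encodable in
lemma vS_spec (h : (VsetD m n σ).Nonempty) :
    vS m n σ ∈ VsetD m n σ ∧ ∀ u ∈ VsetD m n σ, encode (vS m n σ) ≤ encode u := by
  have hspec := (Nat.sInf_mem (h.image Encodable.encode)).choose_spec
  unfold vS
  rw [dif_pos h]
  exact ⟨hspec.1, fun u hu => by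
    rw [hspec.2]
    exact Nat.sInf_le ⟨u, hu, rfl⟩⟩

lemma vS_mem (h : (VsetD m n σ).Nonempty) : vS m n σ ∈ VsetD m n σ := (vS_spec h).1

open Encodable in
lemma vS_min (h : (VsetD m n σ).Nonempty) {u : Finset ℕ} (hu : u ∈ VsetD m n σ) :
    encode (vS m n σ) ≤ encode u := (vS_spec h).2 u hu

open Encodable in
lemma vS_eq {σ : Finset (Finset ℕ)} (h : (VsetD m n σ).Nonempty) {v : Finset ℕ}
    (hv : v ∈ VsetD m n σ) (hmin : ∀ u ∈ VsetD m n σ, encode v ≤ encode u) : vS m n σ = v :=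
  encode_injective (le_antisymm (vS_min h hv) (hmin _ (vS_mem h)))

lemma Vset_anti {ρ σ : Finset (Finset ℕ)} (hsub : ρ ⊆ σ) : VsetD m n σ ⊆ VsetD m n ρ := by
  rintro v ⟨hv1, hv2⟩
  refine ⟨hv1, (Kc m n).down_closed _ hv2 _ (Finset.union_subset_union hsub (Finset.Subset.refl _))
    (Finset.ne_empty_of_mem (Finset.mem_union_right _ (Finset.mem_singleton_self v)))⟩

lemma SC_sub_K : (SCc m n).faces ⊆ (Kc m n).faces := by
  rintro σ ⟨hne, v, hvL, hvK⟩
  exact (Kc m n).down_closed _ hvK _ Finset.subset_union_left hne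

lemma SC_V_nonempty {σ : Finset (Finset ℕ)} (hσ : σ ∈ (SCc m n).faces) :
    (VsetD m n σ).Nonempty := by
  obtain ⟨hne, v, hvL, hvK⟩ := hσ
  exact ⟨v, hvL.2.1 v (Finset.mem_singleton_self v), hvK⟩

lemma singleton_L {v : Finset ℕ} (hv : v ∈ S1 m n) : ({v} : Finset (Finset ℕ)) ∈ (Lc m n).faces := by
  refine ⟨Finset.singleton_nonempty v, ?_, ?_⟩
  · intro A hA
    rw [Finset.mem_singleton] at hA
    exact hA ▸ hv
  · intro A hA B hB
    rw [Finset.mem_singleton] at hA hB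
    subst hA; subst hB
    simp [symmDiff_self]

lemma mem_K_elem {σ : Finset (Finset ℕ)} (hσ : σ ∈ (Kc m n).faces) {A : Finset ℕ} (hA : A ∈ σ) :
    A ⊆ Finset.Icc 1 m ∧ A.card = n := hσ.2.1 A hA

lemma S1_sub_F : S1 m n ⊆ Fnm m n := fun A hA => ⟨hA.1, hA.2.1⟩

/-- `σ ∪ {v(σ)}` is again a face of the star cluster, with the same minimal neighbour. -/
lemma vS_insert {σ : Finset (Finset ℕ)} (hσ : σ ∈ (SCc m n).faces) :
    insert (vS m n σ) σ ∈ (SCc m n).faces ∧ vS m n (insert (vS m n σ) σ) = vS m n σ := by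
  have hV := SC_V_nonempty hσ
  obtain ⟨hvS1, hvK⟩ := vS_mem hV
  have hins : insert (vS m n σ) σ = σ ∪ {vS m n σ} := by
    rw [Finset.insert_eq, Finset.union_comm]
  have hinsK : insert (vS m n σ) σ ∪ {vS m n σ} = σ ∪ {vS m n σ} := by
    rw [hins, Finset.union_assoc, Finset.union_self]
  have hmemSC : insert (vS m n σ) σ ∈ (SCc m n).faces := by
    refine ⟨Finset.insert_ne_empty _ _, vS m n σ, singleton_L hvS1, ?_⟩
    rw [hinsK]
    exact hvK
  have hVins : (VsetD m n (insert (vS m n σ) σ)).Nonempty := SC_V_nonempty hmemSC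
  refine ⟨hmemSC, vS_eq hVins ⟨hvS1, by rw [hinsK]; exact hvK⟩ ?_⟩
  intro u hu
  exact vS_min hV (Vset_anti (Finset.subset_insert _ _) hu)

/-- Key lemma: removing `v(σ)` from `σ` does not change the minimal neighbour, provided `σ`
contains a vertex not containing `1`. -/
lemma vS_erase {σ : Finset (Finset ℕ)} (hσ : σ ∈ (SCc m n).faces) {A : Finset ℕ}
    (hA : A ∈ σ) (h1A : (1:ℕ) ∉ A) (hvin : vS m n σ ∈ σ) :
    vS m n (σ.erase (vS m n σ)) = vS m n σ := by
  have hV := SC_V_nonempty hσ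
  obtain ⟨hvS1, hvK⟩ := vS_mem hV
  have hAne : A ≠ vS m n σ := fun h => h1A (h ▸ hvS1.2.2)
  have hAer : A ∈ σ.erase (vS m n σ) := Finset.mem_erase.mpr ⟨hAne, hA⟩
  have herSC : σ.erase (vS m n σ) ∈ (SCc m n).faces := by
    have hne : σ.erase (vS m n σ) ≠ ∅ := Finset.ne_empty_of_mem hAer
    rcases hσ with ⟨hne', v, hvL, hvK'⟩
    refine ⟨hne, v, hvL, (Kc m n).down_closed _ hvK' _
      (Finset.union_subset_union (Finset.erase_subset _ _) (Finset.Subset.refl _))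
      (Finset.ne_empty_of_mem (Finset.mem_union_right _ (Finset.mem_singleton_self v)))⟩
  have hVer := SC_V_nonempty herSC
  have hσK : σ ∈ (Kc m n).faces := SC_sub_K hσ
  -- every common neighbour of the erased face is a common neighbour of `σ`
  have hwhole : ∀ u ∈ VsetD m n (σ.erase (vS m n σ)), u ∈ VsetD m n σ := by
    rintro u ⟨huS1, huK⟩
    refine ⟨huS1, ?_, ?_, ?_⟩
    · exact ⟨u, Finset.mem_union_right _ (Finset.mem_singleton_self u)⟩
    · intro B hB
      rcases Finset.mem_union.mp hB with hB | hB
      · exact hσK.2.1 B hB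
      · rw [Finset.mem_singleton] at hB
        exact hB ▸ S1_sub_F huS1
    · -- pairwise condition
      have hAcard : A.card = n := (hσK.2.1 A hA).2
      have hducard : (symmDiff A u).card ≤ 2 := by
        refine huK.2.2 A ?_ u ?_
        · exact Finset.mem_union_left _ hAer
        · exact Finset.mem_union_right _ (Finset.mem_singleton_self u)
      have hdvcard : (symmDiff A (vS m n σ)).card ≤ 2 := hσK.2.2 A hA _ hvin
      have hclose : (symmDiff u (vS m n σ)).card ≤ 2 :=
        close_of_common (hAcard.trans huS1.2.1.symm) (hAcard.trans hvS1.2.1.symm)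
          h1A huS1.2.2 hvS1.2.2 hducard hdvcard
      intro B hB B' hB'
      rcases Finset.mem_union.mp hB with hB1 | hB1 <;>
        rcases Finset.mem_union.mp hB' with hB2 | hB2
      · exact hσK.2.2 B hB1 B' hB2
      · rw [Finset.mem_singleton] at hB2
        subst hB2
        by_cases hBv : B = vS m n σ
        · subst hBv
          rw [symmDiff_comm]
          exact hclose
        · exact huK.2.2 B (Finset.mem_union_left _ (Finset.mem_erase.mpr ⟨hBv, hB1⟩)) B'
            (Finset.mem_union_right _ (Finset.mem_singleton_self _))
      · rw [Finset.mem_singleton] at hB1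
        subst hB1
        by_cases hBv : B' = vS m n σ
        · subst hBv
          exact hclose
        · rw [symmDiff_comm]
          exact huK.2.2 B' (Finset.mem_union_left _ (Finset.mem_erase.mpr ⟨hBv, hB2⟩)) B
            (Finset.mem_union_right _ (Finset.mem_singleton_self _))
      · rw [Finset.mem_singleton] at hB1 hB2
        subst hB1; subst hB2
        simp [symmDiff_self]
  refine vS_eq hVer (Vset_anti (Finset.erase_subset _ _) (vS_mem hV)) ?_
  intro u hu
  exact vS_min hV (hwhole u hu)

end Comb

namespace Comb

open Finset Encodable

variable {m n : ℕ}

/-- the "down" faces of the perfect matching on `SC ∖ L` -/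
def P (m n : ℕ) : Set (Finset (Finset ℕ)) :=
  {σ | σ ∈ (SCc m n).faces ∧ (∃ A ∈ σ, (1:ℕ) ∉ A) ∧ vS m n σ ∉ σ}

/-- the pairing function sending a face to the "down" face of its matched pair -/
noncomputable def pd (m n : ℕ) (ρ : Finset (Finset ℕ)) : Finset (Finset ℕ) :=
  if vS m n ρ ∈ ρ then ρ.erase (vS m n ρ) else ρ

lemma L_all_one {ρ : Finset (Finset ℕ)} (h : ρ ∈ (Lc m n).faces) : ∀ A ∈ ρ, (1:ℕ) ∈ A :=
  fun A hA => (h.2.1 A hA).2.2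

lemma mem_L_of {ρ : Finset (Finset ℕ)} (hρ : ρ ∈ (SCc m n).faces)
    (hall : ∀ A ∈ ρ, (1:ℕ) ∈ A) : ρ ∈ (Lc m n).faces := by
  have hK := SC_sub_K hρ
  exact ⟨hK.1, fun A hA => ⟨(hK.2.1 A hA).1, (hK.2.1 A hA).2, hall A hA⟩, hK.2.2⟩

lemma L_sub_K : (Lc m n).faces ⊆ (Kc m n).faces :=
  fun σ h => ⟨h.1, fun A hA => S1_sub_F (h.2.1 A hA), h.2.2⟩

lemma L_sub_SC : (Lc m n).faces ⊆ (SCc m n).faces := by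
  intro σ hσ
  obtain ⟨v, hv⟩ := hσ.1
  refine ⟨Finset.nonempty_iff_ne_empty.mp hσ.1, v, singleton_L (hσ.2.1 v hv), ?_⟩
  have : σ ∪ {v} = σ := Finset.union_eq_left.mpr (Finset.singleton_subset_iff.mpr hv)
  rw [this]
  exact L_sub_K hσ

lemma pd_spec {ρ : Finset (Finset ℕ)} (hρ : ρ ∈ (SCc m n).faces) {A : Finset ℕ}
    (hA : A ∈ ρ) (h1A : (1:ℕ) ∉ A) :
    pd m n ρ ∈ P m n ∧ (ρ = pd m n ρ ∨ ρ = insert (vS m n (pd m n ρ)) (pd m n ρ)) := by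
  unfold pd
  split_ifs with hv
  · have hvs := vS_erase hρ hA h1A hv
    have hvS1 := (vS_mem (SC_V_nonempty hρ)).1
    have hAne : A ≠ vS m n ρ := fun h => h1A (h ▸ hvS1.2.2)
    have hAer : A ∈ ρ.erase (vS m n ρ) := Finset.mem_erase.mpr ⟨hAne, hA⟩
    have herSC : ρ.erase (vS m n ρ) ∈ (SCc m n).faces :=
      (SCc m n).down_closed _ hρ _ (Finset.erase_subset _ _) (Finset.ne_empty_of_mem hAer)
    refine ⟨⟨herSC, ⟨A, hAer, h1A⟩, by rw [hvs]; exact Finset.notMem_erase _ _⟩, Or.inr ?_⟩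
    rw [hvs]
    exact (Finset.insert_erase hv).symm
  · exact ⟨⟨hρ, ⟨A, hA, h1A⟩, hv⟩, Or.inl rfl⟩

/-- the invariant making `CS S` a legitimate subcomplex -/
def Good (m n : ℕ) (S : Finset (Finset (Finset ℕ))) : Prop :=
  (∀ σ₀ ∈ S, σ₀ ∈ P m n) ∧
  ∀ τ₀ ∈ S, ∀ ρ : Finset (Finset ℕ), ρ ≠ ∅ → ρ ⊆ insert (vS m n τ₀) τ₀ →
    (∃ A ∈ ρ, (1:ℕ) ∉ A) → pd m n ρ ∈ S

/-- the faces of the partially collapsed complex -/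
def CSfaces (m n : ℕ) (S : Finset (Finset (Finset ℕ))) : Set (Finset (Finset ℕ)) :=
  (Lc m n).faces ∪ {ρ | ∃ σ₀ ∈ S, ρ = σ₀ ∨ ρ = insert (vS m n σ₀) σ₀}

lemma CSfaces_sub_SC {S : Finset (Finset (Finset ℕ))} (hS : Good m n S) :
    CSfaces m n S ⊆ (SCc m n).faces := by
  rintro ρ (h | ⟨σ₀, hσ₀S, rfl | rfl⟩)
  · exact L_sub_SC h
  · exact (hS.1 _ hσ₀S).1
  · exact (vS_insert (hS.1 _ hσ₀S).1).1

/-- the partially collapsed complex -/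
def CS (m n : ℕ) (S : Finset (Finset (Finset ℕ))) (hS : Good m n S) : AbsSC (Finset ℕ) where
  faces := CSfaces m n S
  not_empty_mem := by
    rintro (h | ⟨σ₀, hσ₀, h | h⟩)
    · exact (Lc m n).not_empty_mem h
    · exact (hS.1 _ hσ₀).1.1 h.symm
    · exact Finset.insert_ne_empty _ _ h.symm
  down_closed := by
    rintro s hs t hts htne
    rcases hs with hL | ⟨σ₀, hσ₀S, hcase⟩
    · exact Or.inl ((Lc m n).down_closed _ hL _ hts htne)
    · have hσ₀P := hS.1 _ hσ₀S
      have hsub2 : t ⊆ insert (vS m n σ₀) σ₀ := by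
        rcases hcase with rfl | rfl
        · exact hts.trans (Finset.subset_insert _ _)
        · exact hts
      have htSC : t ∈ (SCc m n).faces :=
        (SCc m n).down_closed _ (vS_insert hσ₀P.1).1 t hsub2 htne
      by_cases hall : ∀ A ∈ t, (1:ℕ) ∈ A
      · exact Or.inl (mem_L_of htSC hall)
      · push_neg at hall
        obtain ⟨A, hAt, h1A⟩ := hall
        have hπ : pd m n t ∈ S := hS.2 σ₀ hσ₀S t htne hsub2 ⟨A, hAt, h1A⟩
        obtain ⟨hπP, hor⟩ := pd_spec htSC hAt h1A
        exact Or.inr ⟨pd m n t, hπ, hor⟩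

lemma free_pair {S : Finset (Finset (Finset ℕ))} (hS : Good m n S) {σ₀ : Finset (Finset ℕ)}
    (hσ₀S : σ₀ ∈ S)
    (hmax : ∀ τ₀ ∈ S, toLex (τ₀.card, encode (vS m n τ₀)) ≤ toLex (σ₀.card, encode (vS m n σ₀))) :
    ∀ ρ ∈ CSfaces m n S, σ₀ ⊆ ρ → ρ = σ₀ ∨ ρ = insert (vS m n σ₀) σ₀ := by
  have hσ₀P := hS.1 _ hσ₀S
  obtain ⟨hσ₀SC, ⟨A, hAσ₀, h1A⟩, hvout⟩ := hσ₀P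
  rintro ρ (hL | ⟨τ₀, hτ₀S, hcase⟩) hsub
  · exact absurd (L_all_one hL A (hsub hAσ₀)) h1A
  · have hτ₀P := hS.1 _ hτ₀S
    have hmaxτ := hmax τ₀ hτ₀S
    simp only [Prod.Lex.toLex_le_toLex] at hmaxτ
    rcases hcase with rfl | rfl
    · by_cases heq : ρ = σ₀
      · exact Or.inl heq
      · exfalso
        have hlt : σ₀.card < ρ.card := Finset.card_lt_card (hsub.ssubset_of_ne (Ne.symm heq))
        rcases hmaxτ with h | ⟨h, _⟩ <;> omega
    · by_cases heq : τ₀ = σ₀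
      · subst heq; exact Or.inr rfl
      · exfalso
        have huτ : vS m n τ₀ ∉ τ₀ := hτ₀P.2.2
        have hcard_ins : (insert (vS m n τ₀) τ₀).card = τ₀.card + 1 :=
          Finset.card_insert_of_notMem huτ
        have hcards : σ₀.card ≤ τ₀.card + 1 := by
          rw [← hcard_ins]; exact Finset.card_le_card hsub
        rcases hmaxτ with hlt | ⟨hceq, henc⟩
        · have hσeq : σ₀ = insert (vS m n τ₀) τ₀ :=
            Finset.eq_of_subset_of_card_le hsub (by simp only [hcard_ins]; omega)
          have hvs : vS m n σ₀ = vS m n τ₀ := by rw [hσeq]; exact (vS_insert hτ₀P.1).2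
          exact hvout (by rw [hvs, hσeq]; exact Finset.mem_insert_self _ _)
        · have huσ₀ : vS m n τ₀ ∈ σ₀ := by
            by_contra hu
            have hsubτ : σ₀ ⊆ τ₀ := by
              intro x hx
              rcases Finset.mem_insert.mp (hsub hx) with h | h
              · exact absurd (h ▸ hx) hu
              · exact h
            exact heq (Finset.eq_of_subset_of_card_le hsubτ (le_of_eq hceq)).symm
          have huV : vS m n τ₀ ∈ VsetD m n σ₀ := by
            refine ⟨(vS_mem (SC_V_nonempty hτ₀P.1)).1, ?_⟩
            have : σ₀ ∪ {vS m n τ₀} = σ₀ :=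
              Finset.union_eq_left.mpr (Finset.singleton_subset_iff.mpr huσ₀)
            rw [this]
            exact SC_sub_K hσ₀SC
          have hle := vS_min (SC_V_nonempty hσ₀SC) huV
          have hnequ : vS m n σ₀ ≠ vS m n τ₀ := fun h => hvout (h ▸ huσ₀)
          have hltenc : encode (vS m n σ₀) < encode (vS m n τ₀) :=
            lt_of_le_of_ne hle (fun h => hnequ (encode_injective h))
          omega

end Comb

namespace Comb

open Finset Encodable

variable {m n : ℕ}

lemma vS_insert_mem_V {τ₀ : Finset (Finset ℕ)} (hτ₀SC : τ₀ ∈ (SCc m n).faces) :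
    vS m n τ₀ ∈ VsetD m n (insert (vS m n τ₀) τ₀) := by
  refine ⟨(vS_mem (SC_V_nonempty hτ₀SC)).1, ?_⟩
  have : insert (vS m n τ₀) τ₀ ∪ {vS m n τ₀} = insert (vS m n τ₀) τ₀ :=
    Finset.union_eq_left.mpr (Finset.singleton_subset_iff.mpr (Finset.mem_insert_self _ _))
  rw [this]
  exact SC_sub_K (vS_insert hτ₀SC).1

lemma CS_erase_faces {S : Finset (Finset (Finset ℕ))} (hS : Good m n S)
    {σ₀ : Finset (Finset ℕ)} (hσ₀S : σ₀ ∈ S) :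
    CSfaces m n (S.erase σ₀) = CSfaces m n S \ {σ₀, insert (vS m n σ₀) σ₀} := by
  have hσ₀P := hS.1 _ hσ₀S
  obtain ⟨A₀, hA₀, h1A₀⟩ := hσ₀P.2.1
  ext ρ
  constructor
  · rintro (hL | ⟨τ₀, hτ₀E, hcase⟩)
    · refine ⟨Or.inl hL, ?_⟩
      intro hmem
      simp only [Set.mem_insert_iff, Set.mem_singleton_iff] at hmem
      rcases hmem with rfl | rfl
      · exact h1A₀ (L_all_one hL A₀ hA₀)
      · exact h1A₀ (L_all_one hL A₀ (Finset.mem_insert_of_mem hA₀))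
    · have hτ₀S := Finset.mem_of_mem_erase hτ₀E
      have hτ₀ne := Finset.ne_of_mem_erase hτ₀E
      have hτ₀P := hS.1 _ hτ₀S
      refine ⟨Or.inr ⟨τ₀, hτ₀S, hcase⟩, ?_⟩
      intro hmem
      simp only [Set.mem_insert_iff, Set.mem_singleton_iff] at hmem
      rcases hcase with hc | hc <;> rcases hmem with hm | hm
      · exact hτ₀ne (hc.symm.trans hm)
      · have he : τ₀ = insert (vS m n σ₀) σ₀ := hc.symm.trans hm
        apply hτ₀P.2.2
        rw [he, (vS_insert hσ₀P.1).2]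
        exact Finset.mem_insert_self _ _
      · have he : σ₀ = insert (vS m n τ₀) τ₀ := hm.symm.trans hc
        apply hσ₀P.2.2
        rw [he, (vS_insert hτ₀P.1).2]
        exact Finset.mem_insert_self _ _
      · have he : insert (vS m n τ₀) τ₀ = insert (vS m n σ₀) σ₀ := hc.symm.trans hm
        have h1 : vS m n (insert (vS m n τ₀) τ₀) = vS m n τ₀ := (vS_insert hτ₀P.1).2
        have h2 : vS m n (insert (vS m n σ₀) σ₀) = vS m n σ₀ := (vS_insert hσ₀P.1).2
        have hveq : vS m n τ₀ = vS m n σ₀ := by rw [← h1, he, h2]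
        have e1 : (insert (vS m n τ₀) τ₀).erase (vS m n τ₀) = τ₀ :=
          Finset.erase_insert hτ₀P.2.2
        have e2 : (insert (vS m n σ₀) σ₀).erase (vS m n σ₀) = σ₀ :=
          Finset.erase_insert hσ₀P.2.2
        apply hτ₀ne
        calc τ₀ = (insert (vS m n τ₀) τ₀).erase (vS m n τ₀) := e1.symm
          _ = (insert (vS m n σ₀) σ₀).erase (vS m n σ₀) := by rw [he, hveq]
          _ = σ₀ := e2
  · rintro ⟨hCS, hnot⟩
    rcases hCS with hL | ⟨τ₀, hτ₀S, hcase⟩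
    · exact Or.inl hL
    · by_cases hτσ : τ₀ = σ₀
      · exfalso
        apply hnot
        subst hτσ
        simp only [Set.mem_insert_iff, Set.mem_singleton_iff]
        exact hcase
      · exact Or.inr ⟨τ₀, Finset.mem_erase.mpr ⟨hτσ, hτ₀S⟩, hcase⟩

lemma Good_erase {S : Finset (Finset (Finset ℕ))} (hS : Good m n S)
    {σ₀ : Finset (Finset ℕ)} (hσ₀S : σ₀ ∈ S)
    (hmax : ∀ τ₀ ∈ S, toLex (τ₀.card, encode (vS m n τ₀)) ≤ toLex (σ₀.card, encode (vS m n σ₀))) :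
    Good m n (S.erase σ₀) := by
  constructor
  · exact fun τ₀ h => hS.1 _ (Finset.mem_of_mem_erase h)
  · intro τ₀ hτ₀E ρ hρne hρsub hρA
    have hτ₀S := Finset.mem_of_mem_erase hτ₀E
    have hπS : pd m n ρ ∈ S := hS.2 τ₀ hτ₀S ρ hρne hρsub hρA
    refine Finset.mem_erase.mpr ⟨?_, hπS⟩
    intro hπeq
    obtain ⟨A, hAρ, h1A⟩ := hρA
    have hτ₀P := hS.1 _ hτ₀S
    have hσ₀P := hS.1 _ hσ₀S
    have hinsSC := (vS_insert hτ₀P.1).1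
    have hρSC : ρ ∈ (SCc m n).faces := (SCc m n).down_closed _ hinsSC ρ hρsub hρne
    have hvρ_le : encode (vS m n ρ) ≤ encode (vS m n τ₀) :=
      vS_min (SC_V_nonempty hρSC) (Vset_anti hρsub (vS_insert_mem_V hτ₀P.1))
    have hmaxτ := hmax τ₀ hτ₀S
    simp only [Prod.Lex.toLex_le_toLex] at hmaxτ
    have hcard_ins : (insert (vS m n τ₀) τ₀).card = τ₀.card + 1 :=
      Finset.card_insert_of_notMem hτ₀P.2.2
    have hρcard : ρ.card ≤ τ₀.card + 1 := by
      rw [← hcard_ins]; exact Finset.card_le_card hρsub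
    have hτ₀ne := Finset.ne_of_mem_erase hτ₀E
    unfold pd at hπeq
    split_ifs at hπeq with hvin
    · -- σ₀ = ρ.erase (vS ρ)
      have hvs_er : vS m n (ρ.erase (vS m n ρ)) = vS m n ρ := vS_erase hρSC hAρ h1A hvin
      have hσcard : σ₀.card = ρ.card - 1 := by
        rw [← hπeq]; exact Finset.card_erase_of_mem hvin
      have hρpos : 0 < ρ.card := Finset.card_pos.mpr ⟨A, hAρ⟩
      have hvσ₀ : vS m n σ₀ = vS m n ρ := by rw [← hπeq]; exact hvs_er
      rcases hmaxτ with hlt | ⟨hceq, henc⟩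
      · omega
      · have h2 : encode (vS m n τ₀) ≤ encode (vS m n ρ) := by rw [← hvσ₀]; exact henc
        have hvv : vS m n ρ = vS m n τ₀ := encode_injective (le_antisymm hvρ_le h2)
        have hρeq : ρ = insert (vS m n τ₀) τ₀ :=
          Finset.eq_of_subset_of_card_le hρsub (by rw [hcard_ins]; omega)
        apply hτ₀ne
        rw [← hπeq, hvv, hρeq, Finset.erase_insert hτ₀P.2.2]
    · -- σ₀ = ρ
      rcases hmaxτ with hlt | ⟨hceq, henc⟩
      · have hltρ : τ₀.card < ρ.card := by rw [hπeq]; exact hlt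
        have hρeq : ρ = insert (vS m n τ₀) τ₀ :=
          Finset.eq_of_subset_of_card_le hρsub (by rw [hcard_ins]; omega)
        have hveq : vS m n ρ = vS m n τ₀ := by rw [hρeq]; exact (vS_insert hτ₀P.1).2
        exact hvin (by rw [hveq, hρeq]; exact Finset.mem_insert_self _ _)
      · have henc2 : encode (vS m n τ₀) ≤ encode (vS m n ρ) := by rw [hπeq]; exact henc
        have hvv : vS m n ρ = vS m n τ₀ := encode_injective (le_antisymm hvρ_le henc2)
        have hρτ : ρ ⊆ τ₀ := by
          intro x hx
          rcases Finset.mem_insert.mp (hρsub hx) with h | h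
          · exact absurd (show vS m n ρ ∈ ρ by rw [hvv]; exact h ▸ hx) hvin
          · exact h
        have hc' : τ₀.card = σ₀.card := hceq
        have hρeqτ : ρ = τ₀ := Finset.eq_of_subset_of_card_le hρτ (by rw [hπeq]; omega)
        exact hτ₀ne (by rw [← hρeqτ, hπeq])

end Comb

namespace Comb

open Finset Encodable

variable {m n : ℕ}

lemma P_finite (m n : ℕ) : (P m n).Finite := by
  apply Set.Finite.subset (Finset.finite_toSet ((Finset.Icc 1 m).powerset.powerset))
  intro σ hσ
  rw [Finset.mem_coe, Finset.mem_powerset]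
  intro A hA
  exact Finset.mem_powerset.mpr ((SC_sub_K hσ.1).2.1 A hA).1

/-- the set of all "down" faces, as a finset -/
noncomputable def Pfin (m n : ℕ) : Finset (Finset (Finset ℕ)) := (P_finite m n).toFinset

lemma Good_Pfin : Good m n (Pfin m n) := by
  constructor
  · intro σ₀ h
    exact (P_finite m n).mem_toFinset.mp h
  · intro τ₀ hτ₀ ρ hρne hρsub hρA
    have hτ₀P := (P_finite m n).mem_toFinset.mp hτ₀
    have hρSC : ρ ∈ (SCc m n).faces :=
      (SCc m n).down_closed _ (vS_insert hτ₀P.1).1 ρ hρsub hρne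
    obtain ⟨A, hA, h1A⟩ := hρA
    exact (P_finite m n).mem_toFinset.mpr (pd_spec hρSC hA h1A).1

lemma CS_Pfin_faces : CSfaces m n (Pfin m n) = (SCc m n).faces := by
  apply Set.Subset.antisymm (CSfaces_sub_SC Good_Pfin)
  intro σ hσ
  by_cases hall : ∀ A ∈ σ, (1:ℕ) ∈ A
  · exact Or.inl (mem_L_of hσ hall)
  · push_neg at hall
    obtain ⟨A, hA, h1A⟩ := hall
    obtain ⟨hπP, hor⟩ := pd_spec hσ hA h1A
    exact Or.inr ⟨pd m n σ, (P_finite m n).mem_toFinset.mpr hπP, hor⟩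

lemma hequiv_faces_eq {V : Type} (K L : AbsSC V) (h : K.faces = L.faces) :
    Nonempty (ContinuousMap.HomotopyEquiv K.space L.space) := by
  rcases K with ⟨Kf, hK1, hK2⟩
  rcases L with ⟨Lf, hL1, hL2⟩
  simp only at h
  subst h
  exact ⟨ContinuousMap.HomotopyEquiv.refl _⟩

lemma CS_hequiv : ∀ (N : ℕ) (S : Finset (Finset (Finset ℕ))) (hS : Good m n S),
    S.card = N → Nonempty (ContinuousMap.HomotopyEquiv (CS m n S hS).space (Lc m n).space) := by
  intro N
  induction N using Nat.strong_induction_on with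
  | _ N IH =>
    intro S hS hcard
    rcases S.eq_empty_or_nonempty with rfl | hne
    · apply hequiv_faces_eq
      show CSfaces m n ∅ = (Lc m n).faces
      unfold CSfaces
      simp
    · obtain ⟨σ₀, hσ₀S, hmax⟩ :=
        S.exists_max_image (fun τ₀ => toLex (τ₀.card, encode (vS m n τ₀))) hne
      have hσ₀P := hS.1 _ hσ₀S
      have hτne : σ₀.Nonempty := Finset.nonempty_iff_ne_empty.mpr hσ₀P.1.1
      have hGE : Good m n (S.erase σ₀) := Good_erase hS hσ₀S hmax
      have hstep := Collapse.collapse_hequiv (CS m n S hS) σ₀ (vS m n σ₀) hτne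
        (CS m n (S.erase σ₀) hGE) hσ₀P.2.2
        (Or.inr ⟨σ₀, hσ₀S, Or.inr rfl⟩)
        (CS_erase_faces hS hσ₀S)
        (free_pair hS hσ₀S hmax)
      have hcard' : (S.erase σ₀).card < N := by
        rw [← hcard]
        exact Finset.card_erase_lt_of_mem hσ₀S
      have hrest := IH _ hcard' (S.erase σ₀) hGE rfl
      exact ⟨hstep.some.trans hrest.some⟩

lemma SC_hequiv_L (m n : ℕ) :
    Nonempty (ContinuousMap.HomotopyEquiv (SCc m n).space (Lc m n).space) := by
  have e1 := hequiv_faces_eq (SCc m n) (CS m n (Pfin m n) Good_Pfin) CS_Pfin_faces.symm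
  have e2 := CS_hequiv (Pfin m n).card (Pfin m n) Good_Pfin rfl
  exact ⟨e1.some.trans e2.some⟩

end Comb

/-- For `n < m`, with `S₁ = {A ⊆ [m] : |A| = n, 1 ∈ A}`, `L = VR(S₁, 2)`
and `K = VR(F_n^m, 2)`, the star cluster `SC_K(L)` is homotopy equivalent to `L`. -/
theorem stmt7 (m n : ℕ) (h : n < m) :
    AbsSC.HEquiv
      ((VRc (Fnm m n) 2).starCluster
        (VRc {A | A ⊆ Finset.Icc 1 m ∧ A.card = n ∧ 1 ∈ A} 2))
      (VRc {A | A ⊆ Finset.Icc 1 m ∧ A.card = n ∧ 1 ∈ A} 2) := by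
  exact Comb.SC_hequiv_L m n
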